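/- Let T be a p-string with unique smallest end-marker $ and let c ∈ Σs be a static symbol, T̂ = cT, k = R_T(1) the rank of ⟨T⟩ among p-encoded suffixes of T. If p is the largest position ≤ k with L_T[p] = c, then the rank k₋ of the lexicographically largest p-encoded suffix of T that is smaller than ⟨T̂⟩ equals LF_T(p); consequently the rank of ⟨T̂⟩ among p-encoded suffixes of T̂ is LF_T(p)+1 adjusted for insertion. -/

import Mathlib

/-- Symbols of a parameterized string: static symbols `s a` (from Σs) and
parameter symbols `p a` (from Σp). -/
inductive PSym where
  | s : ℕ → PSym
  | p : ℕ → PSym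
deriving DecidableEq

/-- Symbols of a p-encoded string: static symbols, finite distances, and ∞. -/
inductive Enc where
  | s : ℕ → Enc
  | fin : ℕ → Enc
  | inf : Enc
deriving DecidableEq

/-- Order embedding: static symbols < natural numbers < ∞. -/
def Enc.toPair : Enc → ℕ ×ₗ ℕ
  | .s a => toLex (0, a)
  | .fin d => toLex (1, d)
  | .inf => toLex (2, 0)

instance : LinearOrder Enc :=
  LinearOrder.lift' Enc.toPair (by
    rintro (a | a | _) (b | b | _) h <;>
      simp_all [Enc.toPair, toLex_inj, Prod.ext_iff])

/-- Largest position `j < i` (0-based) carrying the same symbol as position `i`. -/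
def prevOcc (w : List PSym) (i : ℕ) : Option ℕ :=
  ((List.range i).filter (fun j => w[j]? = w[i]?)).max?

/-- The p-encoding of position `i` (0-based) of `w`. -/
def pencSym (w : List PSym) (i : ℕ) : Enc :=
  match w[i]? with
  | some (PSym.s a) => Enc.s a
  | some (PSym.p _) =>
    match prevOcc w i with
    | some j => Enc.fin (i - j)
    | none => Enc.inf
  | none => Enc.inf

/-- The p-encoding ⟨w⟩ of a p-string `w`. -/
def penc (w : List PSym) : List Enc :=
  (List.range w.length).map (pencSym w)

/-- Lexicographic (strict) order on p-encoded strings. -/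
def lexLt (x y : List Enc) : Prop := List.Lex (· < ·) x y

def lexLe (x y : List Enc) : Prop := lexLt x y ∨ x = y

/-- Length of the longest common prefix. -/
def lcp {α : Type*} [DecidableEq α] : List α → List α → ℕ
  | a :: x, b :: y => if a = b then lcp x y + 1 else 0
  | _, _ => 0

/-- Number of ∞'s in the longest common prefix of two p-encoded strings. -/
def lcpInf (x y : List Enc) : ℕ := (x.take (lcp x y)).count Enc.inf

/-- Number of distinct p-symbols occurring in `w` (denoted |w|_p). -/
def distinctP (w : List PSym) : ℕ :=
  (w.filterMap (fun s => match s with | PSym.p a => some a | PSym.s _ => none)).dedup.length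

/-- For `w` starting with a p-symbol: the rank of `w[1]` among the distinct
p-symbols of `w[1..h+1]`, where `h+1 = min{|w|, second occurrence of w[1] in w}`. -/
def fceRank (w : List PSym) : ℕ :=
  match w with
  | [] => 0
  | c :: rest => distinctP ((c :: rest).take (min (c :: rest).length (2 + rest.idxOf c)))

/-- The function fce from the paper; `fce ε = $` is modelled as `Enc.s 0`. -/
def fce (w : List PSym) : Enc :=
  match w with
  | [] => Enc.s 0
  | PSym.s a :: _ => Enc.s a
  | w => Enc.fin (fceRank w)


open List

lemma Enc.s_lt_s_iff {b a : ℕ} : Enc.s b < Enc.s a ↔ b < a := by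
  show Enc.toPair (Enc.s b) < Enc.toPair (Enc.s a) ↔ _
  simp [Enc.toPair, Prod.Lex.lt_iff]

lemma Enc.not_lt_s {e : Enc} {a : ℕ} (h : e < Enc.s a) : ∃ b, b < a ∧ e = Enc.s b := by
  cases e with
  | s b => exact ⟨b, Enc.s_lt_s_iff.mp h, rfl⟩
  | fin d =>
    exfalso
    have : Enc.toPair (Enc.fin d) < Enc.toPair (Enc.s a) := h
    simp [Enc.toPair, Prod.Lex.lt_iff] at this
  | inf =>
    exfalso
    have : Enc.toPair Enc.inf < Enc.toPair (Enc.s a) := h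
    simp [Enc.toPair, Prod.Lex.lt_iff] at this

lemma max?_map_succ (l : List ℕ) : (l.map (·+1)).max? = l.max?.map (·+1) := by
  induction l with
  | nil => rfl
  | cons a l ih =>
    simp only [List.map_cons, List.max?_cons, Option.map_some]
    cases h : l.max? with
    | none => simp_all
    | some b => simp_all [Option.max]
open List

lemma prevOcc_cons_s (a : ℕ) (w : List PSym) (i : ℕ) (x : ℕ) (hx : w[i]? = some (PSym.p x)) :
    prevOcc (PSym.s a :: w) (i+1) = (prevOcc w i).map (·+1) := by
  unfold prevOcc
  have h1 : ((List.range (i+1)).filter (fun j => (PSym.s a :: w)[j]? = (PSym.s a :: w)[i+1]?))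
      = ((List.range i).filter (fun j => w[j]? = w[i]?)).map (·+1) := by
    rw [List.range_succ_eq_map, List.filter_cons, List.filter_map]
    have h2 : (PSym.s a :: w)[i+1]? = w[i]? := by simp
    simp only [h2, hx]
    rw [if_neg (by simp)]
    have h3 : ((List.range i).filter ((fun j => decide ((PSym.s a :: w)[j]? = some (PSym.p x))) ∘ Nat.succ))
        = ((List.range i).filter (fun j => decide (w[j]? = some (PSym.p x)))) := by
      apply List.filter_congr; intro j _; simp
    rw [h3]

  rw [h1, max?_map_succ]

lemma pencSym_cons_s (a : ℕ) (w : List PSym) (i : ℕ) :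
    pencSym (PSym.s a :: w) (i+1) = pencSym w i := by
  unfold pencSym
  have h2 : (PSym.s a :: w)[i+1]? = w[i]? := by simp
  rw [h2]
  cases hx : w[i]? with
  | none => simp
  | some c =>
    cases c with
    | s b => simp
    | p x =>
      rw [prevOcc_cons_s a w i x hx]
      cases prevOcc w i with
      | none => rfl
      | some j => show Enc.fin (i+1-(j+1)) = Enc.fin (i-j); congr 1; omega

lemma penc_cons_s (a : ℕ) (w : List PSym) : penc (PSym.s a :: w) = Enc.s a :: penc w := by
  unfold penc
  rw [List.length_cons, List.range_succ_eq_map, List.map_cons, List.map_map]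
  congr 1
  · apply List.map_congr_left
    intro j _
    exact pencSym_cons_s a w j
lemma penc_drop_s (T : List PSym) (m : ℕ) (a : ℕ) (h : T[m]? = some (PSym.s a)) :
    penc (T.drop m) = Enc.s a :: penc (T.drop (m+1)) := by
  have hm : m < T.length := by
    by_contra hc
    rw [List.getElem?_eq_none (by omega)] at h
    simp at h
  have hd : T.drop m = T[m] :: T.drop (m+1) := List.drop_eq_getElem_cons hm
  have hTm : T[m] = PSym.s a := by
    have := List.getElem?_eq_getElem hm
    rw [h] at this
    exact (Option.some.injEq _ _ ▸ this.symm)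
  rw [hd, hTm, penc_cons_s]

lemma penc_length (w : List PSym) : (penc w).length = w.length := by
  simp [penc]

lemma fce_head (w : List PSym) (a : ℕ) (hw : w ≠ []) (h : fce w = Enc.s a) :
    w.head? = some (PSym.s a) := by
  cases w with
  | nil => exact absurd rfl hw
  | cons c rest =>
    cases c with
    | s b => simp [fce] at h; simp [h]
    | p x => simp [fce] at h

lemma penc_head (w : List PSym) (e : Enc) (rest : List Enc) (h : penc w = e :: rest) :
    e = pencSym w 0 := by
  cases w with
  | nil => simp [penc] at h
  | cons c w' =>
    unfold penc at h
    rw [List.length_cons, List.range_succ_eq_map, List.map_cons] at h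
    exact (List.cons.injEq _ _ _ _ ▸ h).1.symm

lemma pencSym_zero_s (w : List PSym) (b : ℕ) (h : pencSym w 0 = Enc.s b) :
    w[0]? = some (PSym.s b) := by
  unfold pencSym at h
  cases hx : w[0]? with
  | none => rw [hx] at h; exact absurd h (by simp)
  | some c =>
    cases c with
    | s d => rw [hx] at h; injection h with h'; rw [h']
    | p x =>
      rw [hx] at h
      cases hpo : prevOcc w 0 <;> rw [hpo] at h <;> exact absurd h (by simp)

theorem stmt16 (T : List PSym) (n : ℕ) (hn : n = T.length)
    -- `$` (modelled as `PSym.s 0`, the smallest symbol) is the end-marker of `T`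
    (hend : T.getLast? = some (PSym.s 0))
    (huniq : ∀ i, i + 1 < n → T[i]? ≠ some (PSym.s 0))
    -- `Rinv i` is the (0-based) starting position of the lexicographically
    -- (i+1)-st p-encoded suffix of `T`
    (Rinv : ℕ → ℕ) (hdom : ∀ i < n, Rinv i < n)
    (hsorted : ∀ i j, i < j → j < n →
      lexLt (penc (T.drop (Rinv i))) (penc (T.drop (Rinv j))))
    -- `R` is the rank function, the inverse of `Rinv`
    (R : ℕ → ℕ) (hRdom : ∀ p < n, R p < n)
    (hRinv : ∀ i < n, R (Rinv i) = i) (hR : ∀ p < n, Rinv (R p) = p)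
    -- the pBWT array `L`:  L i = fce (T[R⁻¹(i)−1..])  (with T[0..] := $)
    (L : ℕ → Enc)
    (hL : ∀ i < n, L i = fce (if Rinv i = 0 then [PSym.s 0] else T.drop (Rinv i - 1)))
    -- the LF-mapping
    (LF : ℕ → ℕ)
    (hLF : ∀ i < n, LF i = if Rinv i = 0 then R (n - 1) else R (Rinv i - 1))
    -- prepend a static symbol c = `PSym.s a`; k is the rank of ⟨T⟩
    (a : ℕ) (k : ℕ) (hk : k = R 0)
    -- p is the largest position ≤ k with L p = c
    (p : ℕ) (hp : p ≤ k) (hpc : L p = Enc.s a)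
    (hmax : ∀ q ≤ k, L q = Enc.s a → q ≤ p) :
    -- the suffix of rank LF(p) is the p-pred of ⟨cT⟩: the lexicographically
    -- largest p-encoded suffix of T smaller than ⟨cT⟩
    lexLt (penc (T.drop (Rinv (LF p)))) (penc (PSym.s a :: T)) ∧
    (∀ j < n, lexLt (penc (T.drop (Rinv j))) (penc (PSym.s a :: T)) →
      j ≤ LF p) := by
  have hT : T ≠ [] := by intro h; rw [h] at hend; simp at hend
  have hn0 : 0 < n := by rw [hn]; exact List.length_pos_iff.mpr hT
  have hkn : k < n := hk ▸ hRdom 0 hn0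
  have hpn : p < n := lt_of_le_of_lt hp hkn
  have hRinvk : Rinv k = 0 := hk ▸ hR 0 hn0
  -- nonempty p-encoded suffixes
  have hne : ∀ m, m < n → ∃ e rest, penc (T.drop m) = e :: rest := by
    intro m hm
    cases hpe : penc (T.drop m) with
    | nil =>
      have := penc_length (T.drop m)
      rw [hpe] at this
      simp [hn] at this
      omega
    | cons e rest => exact ⟨e, rest, rfl⟩
  -- rank comparison
  have rankLt : ∀ i j, i < n → j < n →
      lexLt (penc (T.drop (Rinv i))) (penc (T.drop (Rinv j))) → i < j := by
    intro i j hi hj hlt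
    have hlt2 : List.Lex (· < ·) (penc (T.drop (Rinv i))) (penc (T.drop (Rinv j))) := hlt
    rcases lt_trichotomy i j with h | h | h
    · exact h
    · subst h; exact absurd hlt2 (irrefl _)
    · have h2 : List.Lex (· < ·) (penc (T.drop (Rinv j))) (penc (T.drop (Rinv i))) := hsorted j i h hi
      exact absurd h2 (asymm hlt2)
  -- head symbol of a suffix
  have headSym : ∀ m b rest, m < n → penc (T.drop m) = Enc.s b :: rest →
      T[m]? = some (PSym.s b) := by
    intro m b rest hm hpe
    have h0 := penc_head _ _ _ hpe
    have := pencSym_zero_s _ _ h0.symm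
    rwa [List.getElem?_drop, Nat.add_zero] at this
  rw [penc_cons_s]
  by_cases hpk : p = k
  · -- p = k : a = 0 and LF p = R (n-1)
    have hRp0 : Rinv p = 0 := hpk ▸ hRinvk
    have ha : a = 0 := by
      have := hL p hpn
      rw [if_pos hRp0] at this
      rw [hpc] at this
      simp [fce] at this
      omega
    subst ha
    have hLFp : LF p = R (n - 1) := by rw [hLF p hpn, if_pos hRp0]
    have hn1 : n - 1 < n := by omega
    have hRLF : Rinv (LF p) = n - 1 := by rw [hLFp, hR _ hn1]
    have hlast : T[n-1]? = some (PSym.s 0) := by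
      rw [hn, ← List.getLast?_eq_getElem?]; exact hend
    have hdrop : penc (T.drop (n-1)) = [Enc.s 0] := by
      rw [penc_drop_s T (n-1) 0 hlast]
      have : T.drop (n-1+1) = [] := by
        apply List.drop_eq_nil_of_le; omega
      rw [this]; rfl
    constructor
    · rw [hRLF, hdrop]
      obtain ⟨e, rest, hpe⟩ := hne 0 hn0
      rw [List.drop_zero] at hpe
      rw [hpe]
      exact List.Lex.cons List.Lex.nil
    · intro j hjn hlex
      obtain ⟨e, rest, hpe⟩ := hne (Rinv j) (hdom j hjn)
      rw [hpe] at hlex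
      cases hlex with
      | rel h =>
        obtain ⟨b, hb, _⟩ := Enc.not_lt_s h
        omega
      | cons h =>
        have hTj : T[Rinv j]? = some (PSym.s 0) := headSym _ _ _ (hdom j hjn) hpe
        have : ¬ (Rinv j + 1 < n) := fun hc => huniq _ hc hTj
        have hj1 : Rinv j = n - 1 := by have := hdom j hjn; omega
        have : j = LF p := by
          rw [hLFp, ← hj1, hRinv j hjn]
        omega
  · -- p < k
    have hplt : p < k := lt_of_le_of_ne hp hpk
    have hRp0 : Rinv p ≠ 0 := by
      intro h
      apply hpk
      have : R (Rinv p) = R 0 := by rw [h]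
      rw [hRinv p hpn] at this
      rw [hk, ← this]
    have hRpn : Rinv p < n := hdom p hpn
    have hRp1n : Rinv p - 1 < n := by omega
    have hLp : fce (T.drop (Rinv p - 1)) = Enc.s a := by
      have := hL p hpn
      rw [if_neg hRp0] at this
      rw [← this, hpc]
    have hdropne : T.drop (Rinv p - 1) ≠ [] := by
      intro hc
      have := congrArg List.length hc
      simp at this
      omega
    have hTp1 : T[Rinv p - 1]? = some (PSym.s a) := by
      have hh := fce_head _ _ hdropne hLp
      rwa [List.head?_drop] at hh
    have hLFp : LF p = R (Rinv p - 1) := by rw [hLF p hpn, if_neg hRp0]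
    have hLFpn : LF p < n := by rw [hLFp]; exact hRdom _ hRp1n
    have hRLF : Rinv (LF p) = Rinv p - 1 := by rw [hLFp, hR _ hRp1n]
    have hS : penc (T.drop (Rinv p - 1)) = Enc.s a :: penc (T.drop (Rinv p)) := by
      have := penc_drop_s T (Rinv p - 1) a hTp1
      rwa [Nat.sub_add_cancel (by omega)] at this
    have hXT : lexLt (penc (T.drop (Rinv p))) (penc T) := by
      have := hsorted p k hplt hkn
      rwa [hRinvk, List.drop_zero] at this
    constructor
    · rw [hRLF, hS]
      exact List.Lex.cons hXT
    · intro j hjn hlex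
      by_contra hc
      push_neg at hc
      have hsrt := hsorted (LF p) j hc hjn
      rw [hRLF, hS] at hsrt
      obtain ⟨e, rest, hpe⟩ := hne (Rinv j) (hdom j hjn)
      rw [hpe] at hlex hsrt
      cases hlex with
      | rel h =>
        cases hsrt with
        | rel h2 => exact absurd h2 (asymm h)
        | cons h2 => exact absurd h (irrefl _)
      | cons h =>
        -- e = Enc.s a case (heads equal), h : Lex rest (penc T)
        have hTj : T[Rinv j]? = some (PSym.s a) := headSym _ _ _ (hdom j hjn) hpe
        have hZ : penc (T.drop (Rinv j)) = Enc.s a :: penc (T.drop (Rinv j + 1)) :=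
          penc_drop_s T (Rinv j) a hTj
        have hrest : rest = penc (T.drop (Rinv j + 1)) := by
          rw [hpe] at hZ
          exact (List.cons.injEq _ _ _ _ ▸ hZ).2
        have hX : lexLt (penc (T.drop (Rinv p))) rest := by
          cases hsrt with
          | rel h2 => exact absurd h2 (irrefl _)
          | cons h2 => exact h2
        have hj1n : Rinv j + 1 < n := by
          by_contra hcc
          have : T.drop (Rinv j + 1) = [] := by
            apply List.drop_eq_nil_of_le; omega
          rw [hrest, this] at hX
          exact List.not_lex_nil hX
        set q := R (Rinv j + 1) with hq
        have hqn : q < n := hRdom _ hj1n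
        have hRq : Rinv q = Rinv j + 1 := hR _ hj1n
        have hpq : p < q := by
          apply rankLt p q hpn hqn
          rw [hRq, ← hrest]
          exact hX
        have hqk : q < k := by
          apply rankLt q k hqn hkn
          rw [hRq, hRinvk, List.drop_zero, ← hrest]
          exact h
        have hLq : L q = Enc.s a := by
          rw [hL q hqn, if_neg (by omega)]
          rw [hRq]
          simp only [Nat.add_sub_cancel]
          have : T.drop (Rinv j) = PSym.s a :: T.drop (Rinv j + 1) := by
            have hm : Rinv j < T.length := by rw [← hn]; exact hdom j hjn
            rw [List.drop_eq_getElem_cons hm]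
            congr 1
            have := List.getElem?_eq_getElem hm
            rw [hTj] at this
            exact Option.some_injective _ this.symm
          rw [this]
          rfl
        have := hmax q (le_of_lt hqk) hLq
        omega
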